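/- Let I ⊆ R = ℂ[x_1,…,x_N] be an ideal, let 1 ≤ m ≤ N, and set A = {x_1,…,x_m}. If dim_ℂ D_0[I + ⟨x_1,…,x_m⟩] < ∞, then for every d ∈ ℕ the eliminating truncated dual space E_0^d[I, A] is finite-dimensional over ℂ. -/

import Mathlib

open MvPolynomial

noncomputable section

/-- The polynomial ring `R = ℂ[x_1,…,x_N]`, with variables indexed by `Fin N`. -/
abbrev PolyR (N : ℕ) := MvPolynomial (Fin N) ℂ

/-- A dual functional `q = Σ_α c_α ∂^α` is encoded by its coefficient vector, i.e.
by an element of `MvPolynomial (Fin N) ℂ` (which is exactly the space of finitely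
supported functions `ℕ^N →₀ ℂ`).  Its application to a polynomial `f` is
`q(f) = Σ_α c_α · (coefficient of x^α in f)`. -/
def dapply {N : ℕ} (q f : PolyR N) : ℂ := ∑ α ∈ f.support, q.coeff α * f.coeff α

/-- The Macaulay dual space `D_0[I]` of an ideal `I`, as a `ℂ`-subspace of `D_0`. -/
def dualSpace {N : ℕ} (I : Ideal (PolyR N)) : Submodule ℂ (PolyR N) where
  carrier := {q | ∀ f ∈ I, dapply q f = 0}
  zero_mem' := by intro f _; simp [dapply]
  add_mem' := by
    intro a b ha hb f hf
    have h : dapply (a + b) f = dapply a f + dapply b f := by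
      simp [dapply, MvPolynomial.coeff_add, add_mul, Finset.sum_add_distrib]
    rw [h, ha f hf, hb f hf, add_zero]
  smul_mem' := by
    intro c q hq f hf
    have h : dapply (c • q) f = c * dapply q f := by
      simp [dapply, MvPolynomial.coeff_smul, Finset.mul_sum, mul_assoc]
    rw [h, hq f hf, mul_zero]

/-- The subspace of dual functionals all of whose exponents satisfy `P`. -/
def expSupported {N : ℕ} (P : (Fin N →₀ ℕ) → Prop) : Submodule ℂ (PolyR N) where
  carrier := {q | ∀ α ∈ q.support, P α}
  zero_mem' := by simp
  add_mem' := by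
    intro a b ha hb α hα
    rcases Finset.mem_union.mp (MvPolynomial.support_add hα) with h | h
    · exact ha α h
    · exact hb α h
  smul_mem' := by
    intro c q hq α hα
    exact hq α (MvPolynomial.support_smul hα)

/-- The truncated dual space `D_0^k[I]`: functionals in `D_0[I]` of order at most `k`
(in particular `0` belongs to it). -/
def truncDual {N : ℕ} (I : Ideal (PolyR N)) (k : ℕ) : Submodule ℂ (PolyR N) :=
  dualSpace I ⊓ expSupported (fun α => ∑ i, α i ≤ k)

/-- The eliminating truncated dual space `E_0^d[I, A]`, where the set of variables `A`
is given by a finite set of indices: functionals in `D_0[I]` with `ord_A ≤ d`. -/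
def elimDual {N : ℕ} (I : Ideal (PolyR N)) (A : Finset (Fin N)) (d : ℕ) :
    Submodule ℂ (PolyR N) :=
  dualSpace I ⊓ expSupported (fun α => ∑ i ∈ A, α i ≤ d)

open scoped Classical in
/-- The action `g · q` of the polynomial ring on dual functionals, determined by
`(g·q)(f) = q(g·f)`; concretely `g · ∂^α = Σ_{γ ≤ α} g_γ ∂^{α-γ}`. -/
def dmul {N : ℕ} (g q : PolyR N) : PolyR N :=
  ∑ γ ∈ g.support, ∑ α ∈ q.support,
    if γ ≤ α then (MvPolynomial.monomial (α - γ)) (g.coeff γ * q.coeff α) else 0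

/-- The maximal ideal `m = ⟨x_1,…,x_N⟩` of the origin. -/
def mIdeal (N : ℕ) : Ideal (PolyR N) := Ideal.span (Set.range MvPolynomial.X)

/-- The multiplicative set of polynomials not vanishing at the origin. -/
def atOrigin (N : ℕ) : Submonoid (PolyR N) where
  carrier := {g | MvPolynomial.constantCoeff g ≠ 0}
  one_mem' := by simp
  mul_mem' := by
    intro a b ha hb
    simp only [Set.mem_setOf_eq, map_mul]
    exact mul_ne_zero ha hb

/-- The local ring `R_0` of the origin: the localization of `R` at the maximal ideal
of the origin. -/
abbrev LocR (N : ℕ) := Localization (atOrigin N)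

/-- The extension `I·R_0` of an ideal `I ⊆ R` to the local ring of the origin. -/
def extIdeal {N : ℕ} (I : Ideal (PolyR N)) : Ideal (LocR N) :=
  Ideal.map (algebraMap (PolyR N) (LocR N)) I

/-- The contraction `I·R_0 ∩ R` of the extension of `I` back to `R`. -/
def contExt {N : ℕ} (I : Ideal (PolyR N)) : Ideal (PolyR N) :=
  Ideal.comap (algebraMap (PolyR N) (LocR N)) (extIdeal I)

/-- The local Hilbert function
`H_I(k) = dim_ℂ R/(I + m^{k+1}) − dim_ℂ R/(I + m^k)`
(note that for `k = 0` the subtrahend vanishes since `m^0 = R`). -/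
def hilb {N : ℕ} (I : Ideal (PolyR N)) (k : ℕ) : ℕ :=
  Module.finrank ℂ (PolyR N ⧸ (I + mIdeal N ^ (k + 1)))
    - Module.finrank ℂ (PolyR N ⧸ (I + mIdeal N ^ k))

section Aux

variable {N : ℕ}

lemma dapply_superset (q f : PolyR N) (S : Finset (Fin N →₀ ℕ)) (h : f.support ⊆ S) :
    dapply q f = ∑ α ∈ S, q.coeff α * f.coeff α :=
  Finset.sum_subset h (fun α _ hα => by
    rw [MvPolynomial.notMem_support_iff.mp hα, mul_zero])

lemma dapply_add_right (q a b : PolyR N) : dapply q (a + b) = dapply q a + dapply q b := by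
  rw [dapply_superset q (a + b) (a.support ∪ b.support) (fun α h => MvPolynomial.support_add h),
      dapply_superset q a (a.support ∪ b.support) Finset.subset_union_left,
      dapply_superset q b (a.support ∪ b.support) Finset.subset_union_right,
      ← Finset.sum_add_distrib]
  exact Finset.sum_congr rfl fun α _ => by rw [MvPolynomial.coeff_add]; ring

lemma dapply_smul_right (q : PolyR N) (c : ℂ) (f : PolyR N) :
    dapply q (c • f) = c * dapply q f := by
  rw [dapply_superset q (c • f) f.support (fun α h => MvPolynomial.support_smul h),
      dapply, Finset.mul_sum]
  exact Finset.sum_congr rfl fun α _ => by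
    rw [MvPolynomial.coeff_smul, smul_eq_mul]; ring

lemma dapply_zero_left (f : PolyR N) : dapply 0 f = 0 := by simp [dapply]

/-- `dapply q` as a linear map in the second argument. -/
def dapplyL (q : PolyR N) : PolyR N →ₗ[ℂ] ℂ where
  toFun f := dapply q f
  map_add' := dapply_add_right q
  map_smul' c f := dapply_smul_right q c f

lemma dapply_divMonomial (q f : PolyR N) (i : Fin N) :
    dapply (q.divMonomial (Finsupp.single i 1)) f = dapply q (f * MvPolynomial.X i) := by
  rw [dapply, dapply, MvPolynomial.support_mul_X, Finset.sum_map]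
  refine Finset.sum_congr rfl fun β _ => ?_
  have h1 : (addRightEmbedding (Finsupp.single i 1)) β = β + Finsupp.single i 1 := addRightEmbedding_apply _ _
  rw [h1, MvPolynomial.coeff_mul_X, MvPolynomial.coeff_divMonomial, add_comm]

lemma div_mem_dual (I : Ideal (PolyR N)) (q : PolyR N) (hq : q ∈ dualSpace I) (i : Fin N) :
    q.divMonomial (Finsupp.single i 1) ∈ dualSpace I := by
  intro f hf
  rw [dapply_divMonomial]
  exact hq _ (Ideal.mul_mem_right _ _ hf)

lemma single_sum_mem {A : Finset (Fin N)} {i : Fin N} (hi : i ∈ A) :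
    ∑ j ∈ A, (Finsupp.single i 1 : Fin N →₀ ℕ) j = 1 := by
  classical
  have : ∀ j ∈ A, (Finsupp.single i 1 : Fin N →₀ ℕ) j = if j = i then 1 else 0 := by
    intro j _
    rw [Finsupp.single_apply]
    simp [eq_comm]
  rw [Finset.sum_congr rfl this, Finset.sum_ite_eq' A i (fun _ => 1), if_pos hi]

lemma div_mem_exp (A : Finset (Fin N)) (d : ℕ) (q : PolyR N) (i : Fin N) (hi : i ∈ A)
    (hq : q ∈ expSupported (fun α => ∑ j ∈ A, α j ≤ d + 1)) :
    q.divMonomial (Finsupp.single i 1) ∈ expSupported (fun α => ∑ j ∈ A, α j ≤ d) := by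
  intro β hβ
  have hsup : Finsupp.single i 1 + β ∈ q.support := by
    rw [MvPolynomial.mem_support_iff] at hβ ⊢
    rwa [MvPolynomial.coeff_divMonomial] at hβ
  have h1 : (∑ j ∈ A, ((Finsupp.single i 1 + β : Fin N →₀ ℕ) j)) ≤ d + 1 := hq _ hsup
  have h2 : ∑ j ∈ A, ((Finsupp.single i 1 + β : Fin N →₀ ℕ) j)
      = (∑ j ∈ A, (Finsupp.single i 1 : Fin N →₀ ℕ) j) + ∑ j ∈ A, β j := by
    rw [← Finset.sum_add_distrib]
    exact Finset.sum_congr rfl fun j _ => rfl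
  rw [h2, single_sum_mem hi] at h1
  omega

lemma div_eq_zero_of_ord0 (A : Finset (Fin N)) (q : PolyR N)
    (hq : q ∈ expSupported (fun α => ∑ j ∈ A, α j ≤ 0)) {i : Fin N} (hi : i ∈ A) :
    q.divMonomial (Finsupp.single i 1) = 0 := by
  ext β
  rw [MvPolynomial.coeff_divMonomial, MvPolynomial.coeff_zero]
  by_contra h
  have hsup : Finsupp.single i 1 + β ∈ q.support := MvPolynomial.mem_support_iff.mpr h
  have h1 : (∑ j ∈ A, ((Finsupp.single i 1 + β : Fin N →₀ ℕ) j)) ≤ 0 := hq _ hsup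
  have h2 : (1 : ℕ) ≤ ∑ j ∈ A, ((Finsupp.single i 1 + β : Fin N →₀ ℕ) j) := by
    calc (1 : ℕ) = ((Finsupp.single i 1 + β : Fin N →₀ ℕ) i) - β i := by simp
    _ ≤ ((Finsupp.single i 1 + β : Fin N →₀ ℕ) i) := Nat.sub_le _ _
    _ ≤ ∑ j ∈ A, ((Finsupp.single i 1 + β : Fin N →₀ ℕ) j) :=
        Finset.single_le_sum (f := fun j => ((Finsupp.single i 1 + β : Fin N →₀ ℕ) j))
          (fun j _ => Nat.zero_le _) hi
  omega

lemma kernel_in_V (I : Ideal (PolyR N)) (A : Finset (Fin N)) (q : PolyR N)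
    (hq : q ∈ dualSpace I)
    (h0 : ∀ i ∈ A, q.divMonomial (Finsupp.single i 1) = 0) :
    q ∈ dualSpace (I + Ideal.span ((fun i => (MvPolynomial.X i : PolyR N)) ''
      (A : Set (Fin N)))) := by
  classical
  intro f hf
  rw [Submodule.add_eq_sup] at hf
  obtain ⟨a, ha, b, hb, rfl⟩ := Submodule.mem_sup.mp hf
  rw [dapply_add_right, hq a ha, zero_add]
  have himg : ((fun i => (MvPolynomial.X i : PolyR N)) '' (A : Set (Fin N)))
      = ↑(A.image (fun i => (MvPolynomial.X i : PolyR N))) := by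
    rw [Finset.coe_image]
  rw [himg] at hb
  obtain ⟨c, -, hc⟩ := Submodule.mem_span_finset.mp hb
  have hb' : b = ∑ p ∈ A.image (fun i => (MvPolynomial.X i : PolyR N)), c p * p := by
    rw [← hc]; exact Finset.sum_congr rfl fun p _ => rfl
  rw [hb']
  have : dapply q (∑ p ∈ A.image (fun i => (MvPolynomial.X i : PolyR N)), c p * p)
      = ∑ p ∈ A.image (fun i => (MvPolynomial.X i : PolyR N)), dapply q (c p * p) :=
    map_sum (dapplyL q) _ _
  rw [this]
  refine Finset.sum_eq_zero fun p hp => ?_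
  obtain ⟨i, hi, rfl⟩ := Finset.mem_image.mp hp
  rw [← dapply_divMonomial, h0 i hi, dapply_zero_left]

lemma fd_of_map {K V W : Type*} [Field K] [AddCommGroup V] [Module K V]
    [AddCommGroup W] [Module K W] (f : V →ₗ[K] W) [FiniteDimensional K W]
    (hker : FiniteDimensional K (LinearMap.ker f)) : FiniteDimensional K V := by
  obtain ⟨C, hC⟩ := Submodule.exists_isCompl (LinearMap.ker f)
  have e1 : (V ⧸ LinearMap.ker f) ≃ₗ[K] LinearMap.range f := f.quotKerEquivRange
  have e2 : (V ⧸ LinearMap.ker f) ≃ₗ[K] C := Submodule.quotientEquivOfIsCompl _ C hC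
  have hC1 : FiniteDimensional K C :=
    Module.Finite.equiv (e2.symm.trans e1).symm
  have e3 : ((LinearMap.ker f) × C) ≃ₗ[K] V := Submodule.prodEquivOfIsCompl _ C hC
  exact Module.Finite.equiv e3

end Aux

/-- With `A = {x_1,…,x_m}` (`1 ≤ m ≤ N`), if
`dim_ℂ D_0[I + ⟨x_1,…,x_m⟩] < ∞`, then every eliminating truncated dual space
`E_0^d[I, A]` is finite dimensional over `ℂ`. -/
theorem statement15 {N : ℕ} (hN : 1 ≤ N) (I : Ideal (PolyR N)) (m : ℕ)
    (hm1 : 1 ≤ m) (hmN : m ≤ N)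
    (A : Finset (Fin N)) (hA : A = Finset.univ.filter (fun i : Fin N => (i : ℕ) < m))
    (hfin : FiniteDimensional ℂ
      (dualSpace (I + Ideal.span ((fun i => (MvPolynomial.X i : PolyR N)) ''
        (A : Set (Fin N))))))
    (d : ℕ) :
    FiniteDimensional ℂ (elimDual I A d) := by
  induction d with
  | zero =>
    have hle : elimDual I A 0 ≤ dualSpace (I + Ideal.span
        ((fun i => (MvPolynomial.X i : PolyR N)) '' (A : Set (Fin N)))) := by
      intro q hq
      exact kernel_in_V I A q hq.1 (fun i hi => div_eq_zero_of_ord0 A q hq.2 hi)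
    exact Submodule.finiteDimensional_of_le hle
  | succ d ih =>
    let Φ : elimDual I A (d + 1) →ₗ[ℂ] ((i : A) → elimDual I A d) :=
      { toFun := fun q => fun i => ⟨(q : PolyR N).divMonomial (Finsupp.single (i : Fin N) 1),
          ⟨div_mem_dual I _ q.2.1 _, div_mem_exp A d _ _ i.2 q.2.2⟩⟩
        map_add' := by
          intro a b
          funext i
          apply Subtype.ext
          show ((a : PolyR N) + (b : PolyR N)).divMonomial _ = _
          rw [MvPolynomial.add_divMonomial]
          rfl
        map_smul' := by
          intro c a
          funext i
          apply Subtype.ext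
          show ((c • (a : PolyR N)).divMonomial _) = c • ((a : PolyR N).divMonomial _)
          ext β
          rw [MvPolynomial.coeff_divMonomial, MvPolynomial.coeff_smul,
            MvPolynomial.coeff_smul, MvPolynomial.coeff_divMonomial] }
    have hkermem : ∀ q ∈ LinearMap.ker Φ, ((q : PolyR N) ∈ dualSpace (I + Ideal.span
        ((fun i => (MvPolynomial.X i : PolyR N)) '' (A : Set (Fin N))))) := by
      intro q hq
      refine kernel_in_V I A _ q.2.1 (fun i hi => ?_)
      have := congrFun (LinearMap.mem_ker.mp hq) ⟨i, hi⟩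
      exact Subtype.ext_iff.mp this
    let ψ : LinearMap.ker Φ →ₗ[ℂ] (dualSpace (I + Ideal.span
        ((fun i => (MvPolynomial.X i : PolyR N)) '' (A : Set (Fin N))))) :=
      { toFun := fun q => ⟨((q : elimDual I A (d + 1)) : PolyR N), hkermem q.1 q.2⟩
        map_add' := fun a b => rfl
        map_smul' := fun c a => rfl }
    have hinj : Function.Injective ψ := by
      intro a b h
      simp only [ψ, LinearMap.coe_mk, AddHom.coe_mk, Subtype.mk.injEq] at h
      exact Subtype.ext (Subtype.ext h)
    have hker : FiniteDimensional ℂ (LinearMap.ker Φ) :=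
      FiniteDimensional.of_injective ψ hinj
    exact fd_of_map Φ hker
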